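/- Let X be a real normed space and x an extreme point of the closed unit ball of X with ‖x‖ = 1. Suppose x = Σₙ xₙ (a norm-convergent series) with Σₙ ‖xₙ‖ = 1. Then for every n, xₙ = ‖xₙ‖ · x. -/

import Mathlib

/-- If an extreme point `x` of the unit ball, of norm one, is written as a norm-convergent
series `x = Σₙ xₙ` with `Σₙ ‖xₙ‖ = 1`, then each `xₙ` is `‖xₙ‖ • x`. -/
theorem stmt5 {X : Type*} [NormedAddCommGroup X] [NormedSpace ℝ X]
    (x : X) (hx : x ∈ (Metric.closedBall (0 : X) 1).extremePoints ℝ)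
    (hnorm : ‖x‖ = 1) (xs : ℕ → X) (hsum : HasSum xs x)
    (hns : Summable fun n => ‖xs n‖) (htot : ∑' n, ‖xs n‖ = 1) :
    ∀ n, xs n = ‖xs n‖ • x := by
  intro n
  obtain ⟨hxmem, hext⟩ := hx
  set a := ‖xs n‖ with ha
  have ha0 : (0:ℝ) ≤ a := norm_nonneg _
  have hupd : HasSum (Function.update xs n 0) (x - xs n) := by
    have := hsum.update n 0
    simpa [sub_eq_neg_add] using this
  have hnupd : HasSum (fun m => ‖Function.update xs n 0 m‖) (1 - a) := by
    have h1 : (fun m => ‖Function.update xs n 0 m‖)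
        = Function.update (fun m => ‖xs m‖) n 0 := by
      funext m
      rcases eq_or_ne m n with rfl | h
      · simp
      · simp [Function.update_of_ne h]
    rw [h1]
    have := hns.hasSum.update n 0
    rw [htot] at this
    simpa [ha, sub_eq_neg_add] using this
  have hy : ‖x - xs n‖ ≤ 1 - a := by
    rw [← hupd.tsum_eq, ← hnupd.tsum_eq]
    exact norm_tsum_le_tsum_norm ⟨_, hnupd⟩
  have ha1 : a ≤ 1 := by
    have : (0:ℝ) ≤ 1 - a := by
      rw [← hnupd.tsum_eq]
      exact tsum_nonneg fun m => norm_nonneg _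
    linarith
  rcases eq_or_lt_of_le ha0 with h0 | h0
  · have hz : xs n = 0 := norm_eq_zero.mp (ha ▸ h0.symm)
    rw [hz, ← h0, zero_smul]
  rcases eq_or_lt_of_le ha1 with h1 | h1
  · have hz : x - xs n = 0 := by
      have h := hy
      rw [h1] at h
      simpa using le_antisymm (by simpa using h) (norm_nonneg (x - xs n))
    have hxx : xs n = x := (sub_eq_zero.mp hz).symm
    rw [hxx, h1, one_smul]
  · set y₁ := a⁻¹ • xs n with hy₁
    set y₂ := (1 - a)⁻¹ • (x - xs n) with hy₂
    have hm1 : y₁ ∈ Metric.closedBall (0:X) 1 := by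
      rw [Metric.mem_closedBall, dist_zero_right, hy₁, norm_smul,
        Real.norm_eq_abs, abs_of_pos (inv_pos.mpr h0), ← ha]
      rw [inv_mul_cancel₀ (ne_of_gt h0)]
    have hm2 : y₂ ∈ Metric.closedBall (0:X) 1 := by
      rw [Metric.mem_closedBall, dist_zero_right, hy₂, norm_smul,
        Real.norm_eq_abs, abs_of_pos (inv_pos.mpr (by linarith))]
      calc (1-a)⁻¹ * ‖x - xs n‖ ≤ (1-a)⁻¹ * (1 - a) :=
            mul_le_mul_of_nonneg_left hy (le_of_lt (inv_pos.mpr (by linarith)))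
        _ = 1 := inv_mul_cancel₀ (by linarith)
    have hseg : x ∈ openSegment ℝ y₁ y₂ := by
      refine ⟨a, 1 - a, h0, by linarith, by ring, ?_⟩
      rw [hy₁, hy₂, smul_inv_smul₀ (ne_of_gt h0), smul_inv_smul₀ (by linarith : (1:ℝ)-a ≠ 0)]
      abel
    have heq := hext hm1 hm2 hseg
    rw [← heq, hy₁, smul_inv_smul₀ (ne_of_gt h0)]
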